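/- Projection (and, more generally, contraction) does not increase the trace norm: if M is a complex d × d matrix with I − MᴴM positive semidefinite, then for every complex d × d matrix A, ‖M·A·Mᴴ‖₁ ≤ ‖A‖₁. -/

import Mathlib

open Matrix
open scoped ComplexOrder

/-- The positive semidefinite square root of a positive semidefinite matrix
(the definition removed from Mathlib, restored with its old meaning). -/
noncomputable def Matrix.PosSemidef.sqrt {n 𝕜 : Type*} [Fintype n] [DecidableEq n] [RCLike 𝕜]
    {A : Matrix n n 𝕜} (hA : A.PosSemidef) : Matrix n n 𝕜 :=
  hA.1.eigenvectorUnitary.1 * diagonal ((↑) ∘ (√·) ∘ hA.1.eigenvalues) *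
  (star hA.1.eigenvectorUnitary : Matrix n n 𝕜)

/-- The trace norm of a complex square matrix: the trace of the positive
semidefinite square root of `Aᴴ * A`. -/
noncomputable def traceNorm {d : Type*} [Fintype d] [DecidableEq d] (A : Matrix d d ℂ) : ℝ :=
  ((Matrix.posSemidef_conjTranspose_mul_self A).sqrt.trace).re

open scoped Matrix.Norms.L2Operator

set_option linter.unusedSectionVars false

namespace TraceNormAux


variable {d : Type*} [Fintype d] [DecidableEq d]

lemma sq_norm_eq (y : EuclideanSpace ℂ d) :
    (‖y‖ : ℝ) ^ 2 = (star (WithLp.equiv 2 (d → ℂ) y) ⬝ᵥ (WithLp.equiv 2 (d → ℂ) y)).re := by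
  rw [← inner_self_eq_norm_sq (𝕜 := ℂ) y, EuclideanSpace.inner_eq_star_dotProduct, dotProduct_comm]
  rfl

lemma opNorm_le_one {M : Matrix d d ℂ} (hM : (1 - Mᴴ * M).PosSemidef) : ‖M‖ ≤ 1 := by
  rw [l2_opNorm_def]
  refine ContinuousLinearMap.opNorm_le_bound _ zero_le_one fun x => ?_
  rw [one_mul]
  have h := hM.dotProduct_mulVec_nonneg ((WithLp.equiv 2 (d → ℂ)) x)
  rw [sub_mulVec, dotProduct_sub, one_mulVec, ← mulVec_mulVec, dotProduct_mulVec,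
    ← star_mulVec] at h
  have h' : (star (M *ᵥ (WithLp.equiv 2 (d → ℂ)) x) ⬝ᵥ (M *ᵥ (WithLp.equiv 2 (d → ℂ)) x)).re
      ≤ (star ((WithLp.equiv 2 (d → ℂ)) x) ⬝ᵥ ((WithLp.equiv 2 (d → ℂ)) x)).re := by
    have := Complex.le_def.mp h
    simp only [Complex.sub_re, Complex.zero_re] at this
    linarith [this.1]
  have hnorm : ‖(LinearEquiv.trans toEuclideanLin LinearMap.toContinuousLinearMap) M x‖ ^ 2
      ≤ ‖x‖ ^ 2 := by
    rw [sq_norm_eq, sq_norm_eq]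
    convert h' using 3
    all_goals rfl
  exact (pow_le_pow_iff_left₀ (norm_nonneg _) (norm_nonneg _) two_ne_zero).mp hnorm




lemma entry_bound (B : Matrix d d ℂ) (v : EuclideanSpace ℂ d) (hv : ‖v‖ = 1) :
    ‖star (WithLp.equiv 2 (d → ℂ) v) ⬝ᵥ (B *ᵥ WithLp.equiv 2 (d → ℂ) v)‖ ≤ ‖B‖ := by
  have h1 := norm_inner_le_norm (𝕜 := ℂ) v (toEuclideanCLM (𝕜 := ℂ) B v)
  rw [EuclideanSpace.inner_eq_star_dotProduct, dotProduct_comm] at h1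
  have h2 : (toEuclideanCLM (𝕜 := ℂ) B v).ofLp =
      B *ᵥ (WithLp.equiv 2 (d → ℂ)) v := by
    rw [ofLp_toEuclideanCLM]; rfl
  rw [h2] at h1
  have h3 : ‖toEuclideanCLM (𝕜 := ℂ) B v‖ ≤ ‖B‖ := by
    calc ‖toEuclideanCLM (𝕜 := ℂ) B v‖ ≤ ‖toEuclideanCLM (𝕜 := ℂ) B‖ * ‖v‖ :=
          ContinuousLinearMap.le_opNorm _ _
      _ = ‖B‖ := by rw [hv, mul_one, ← cstar_norm_def]
  calc ‖star (WithLp.equiv 2 (d → ℂ) v) ⬝ᵥ (B *ᵥ WithLp.equiv 2 (d → ℂ) v)‖ ≤ ‖v‖ * ‖toEuclideanCLM (𝕜 := ℂ) B v‖ := h1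
    _ ≤ ‖B‖ := by rw [hv, one_mul]; exact h3

lemma re_trace_mul_le {Q : Matrix d d ℂ} (hQ : Q.PosSemidef) (B : Matrix d d ℂ)
    (hB : ‖B‖ ≤ 1) : ((B * Q).trace).re ≤ Q.trace.re := by
  set V : Matrix d d ℂ := (hQ.1.eigenvectorUnitary : Matrix d d ℂ) with hV
  set D : Matrix d d ℂ := diagonal (Complex.ofReal ∘ hQ.1.eigenvalues) with hD
  have hVV : Vᴴ * V = 1 := by
    rw [← star_eq_conjTranspose]; exact Unitary.coe_star_mul_self hQ.1.eigenvectorUnitary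
  have hVV' : V * Vᴴ = 1 := by
    rw [← star_eq_conjTranspose]; exact Unitary.coe_mul_star_self hQ.1.eigenvectorUnitary
  have hspec : Q = V * D * Vᴴ := by
    rw [← star_eq_conjTranspose]; exact hQ.1.spectral_theorem.trans (Unitary.conjStarAlgAut_apply _ _)
  have htrQ : Q.trace = D.trace := by
    rw [hspec, trace_mul_cycle, hVV, one_mul]
  have htr1 : (B * Q).trace = ((Vᴴ * B * V) * D).trace := by
    rw [hspec, ← mul_assoc, ← mul_assoc, trace_mul_cycle, mul_assoc Vᴴ B V]
  have hdiag : ∀ (Y : Matrix d d ℂ) (f : d → ℂ), (Y * diagonal f).trace = ∑ i, Y i i * f i := by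
    intro Y f
    simp [trace, diag, mul_diagonal]
  rw [htr1, htrQ, hD, hdiag, trace_diagonal]
  simp only [Complex.re_sum, Function.comp]
  apply Finset.sum_le_sum
  intro i _
  have hent : (Vᴴ * B * V) i i = star (WithLp.equiv 2 (d → ℂ) (hQ.1.eigenvectorBasis i)) ⬝ᵥ
      (B *ᵥ WithLp.equiv 2 (d → ℂ) (hQ.1.eigenvectorBasis i)) := by
    simp only [mul_apply, conjTranspose_apply, dotProduct, mulVec, Pi.star_apply]
    have hv : ∀ k, (WithLp.equiv 2 (d → ℂ)) (hQ.1.eigenvectorBasis i) k = V k i :=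
      fun k => (hQ.1.eigenvectorUnitary_apply k i).symm
    simp only [hv, Finset.sum_mul, Finset.mul_sum]
    rw [Finset.sum_comm]
    exact Finset.sum_congr rfl fun j _ => Finset.sum_congr rfl fun k _ => by ring
  have hb := entry_bound B (hQ.1.eigenvectorBasis i) (hQ.1.eigenvectorBasis.orthonormal.1 i)
  rw [← hent] at hb
  have hre : ((Vᴴ * B * V) i i).re ≤ 1 := by
    calc ((Vᴴ * B * V) i i).re ≤ ‖(Vᴴ * B * V) i i‖ := Complex.re_le_norm _
      _ ≤ ‖B‖ := hb
      _ ≤ 1 := hB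
  have hnn : 0 ≤ hQ.1.eigenvalues i := hQ.eigenvalues_nonneg i
  have : ((Vᴴ * B * V) i i * (hQ.1.eigenvalues i : ℂ)).re
      = ((Vᴴ * B * V) i i).re * hQ.1.eigenvalues i := by
    simp [Complex.mul_re]
  rw [this]
  have h1 : (1 * (hQ.1.eigenvalues i : ℂ)).re = hQ.1.eigenvalues i := by simp
  calc ((Vᴴ * B * V) i i).re * hQ.1.eigenvalues i ≤ 1 * hQ.1.eigenvalues i :=
        mul_le_mul_of_nonneg_right hre hnn
    _ = _ := by simp




lemma diagonal_congr {f g : d → ℂ} (h : ∀ i, f i = g i) : diagonal f = diagonal g := by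
  rw [funext h]

lemma conj_mul {V : Matrix d d ℂ} (hVV : Vᴴ * V = 1) (f g : d → ℂ) :
    (V * diagonal f * Vᴴ) * (V * diagonal g * Vᴴ) = V * diagonal (fun i => f i * g i) * Vᴴ := by
  have h1 : diagonal f * diagonal g = diagonal (fun i => f i * g i) := by
    rw [diagonal_mul_diagonal]
  calc (V * diagonal f * Vᴴ) * (V * diagonal g * Vᴴ)
      = V * diagonal f * (Vᴴ * V) * diagonal g * Vᴴ := by simp only [mul_assoc]
    _ = V * (diagonal f * diagonal g) * Vᴴ := by rw [hVV, mul_one]; simp only [mul_assoc]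
    _ = _ := by rw [h1]

lemma conj_ct (V : Matrix d d ℂ) (f : d → ℝ) :
    (V * diagonal (fun i => (f i : ℂ)) * Vᴴ)ᴴ = V * diagonal (fun i => (f i : ℂ)) * Vᴴ := by
  have hs : (star fun i => ((f i : ℂ))) = fun i => ((f i : ℂ)) := by
    funext i; simp [Pi.star_apply, Complex.conj_ofReal]
  simp only [conjTranspose_mul, conjTranspose_conjTranspose, diagonal_conjTranspose, hs,
    mul_assoc]

lemma aux1 {l : ℝ} (hl : 0 ≤ l) :
    (if l = 0 then (0:ℝ) else (Real.sqrt l)⁻¹) * l = Real.sqrt l := by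
  by_cases h : l = 0
  · simp [h]
  · have hl' : 0 < l := lt_of_le_of_ne hl (Ne.symm h)
    have hs : Real.sqrt l ≠ 0 := ne_of_gt (Real.sqrt_pos.mpr hl')
    rw [if_neg h]
    field_simp
    rw [Real.sq_sqrt hl]

lemma aux2 {l : ℝ} (hl : 0 ≤ l) :
    (if l = 0 then (0:ℝ) else (Real.sqrt l)⁻¹) * Real.sqrt l = if l = 0 then 0 else 1 := by
  by_cases h : l = 0
  · simp [h]
  · have hl' : 0 < l := lt_of_le_of_ne hl (Ne.symm h)
    have hs : Real.sqrt l ≠ 0 := ne_of_gt (Real.sqrt_pos.mpr hl')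
    rw [if_neg h, if_neg h, inv_mul_cancel₀ hs]

lemma aux3 {l : ℝ} (hl : 0 ≤ l) :
    (if l = 0 then (0:ℝ) else (Real.sqrt l)⁻¹) * l * (if l = 0 then (0:ℝ) else (Real.sqrt l)⁻¹)
      = if l = 0 then 0 else 1 := by
  rw [aux1 hl]
  by_cases h : l = 0
  · simp [h]
  · have hl' : 0 < l := lt_of_le_of_ne hl (Ne.symm h)
    have hs : Real.sqrt l ≠ 0 := ne_of_gt (Real.sqrt_pos.mpr hl')
    rw [if_neg h, if_neg h, mul_inv_cancel₀ hs]


lemma polar (X : Matrix d d ℂ) :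
    ∃ U : Matrix d d ℂ, ‖U‖ ≤ 1 ∧ X = U * (posSemidef_conjTranspose_mul_self X).sqrt ∧
      Uᴴ * X = (posSemidef_conjTranspose_mul_self X).sqrt := by
  have hG := posSemidef_conjTranspose_mul_self X
  set lam : d → ℝ := hG.1.eigenvalues with hlam
  set V : Matrix d d ℂ := (hG.1.eigenvectorUnitary : Matrix d d ℂ) with hVdef
  have hVV : Vᴴ * V = 1 := Unitary.coe_star_mul_self hG.1.eigenvectorUnitary
  have hVV' : V * Vᴴ = 1 := Unitary.coe_mul_star_self hG.1.eigenvectorUnitary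
  have hspec : Xᴴ * X = V * diagonal (fun i => (lam i : ℂ)) * Vᴴ := hG.1.spectral_theorem.trans (Unitary.conjStarAlgAut_apply _ _)
  have hP : (posSemidef_conjTranspose_mul_self X).sqrt
      = V * diagonal (fun i => ((Real.sqrt (lam i) : ℝ) : ℂ)) * Vᴴ := rfl
  set p : d → ℝ := fun i => if lam i = 0 then 0 else (Real.sqrt (lam i))⁻¹ with hp
  set eps : d → ℝ := fun i => if lam i = 0 then 0 else 1 with heps
  have hnn : ∀ i, 0 ≤ lam i := fun i => hG.eigenvalues_nonneg i
  have hpl : ∀ i, p i * lam i = Real.sqrt (lam i) := fun i => aux1 (hnn i)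
  have hps : ∀ i, p i * Real.sqrt (lam i) = eps i := fun i => aux2 (hnn i)
  have hplp : ∀ i, p i * lam i * p i = eps i := fun i => aux3 (hnn i)
  have heps2 : ∀ i, (1 - eps i) * (1 - eps i) = 1 - eps i := by
    intro i; by_cases h : lam i = 0 <;> simp [heps, h]
  have hepsl : ∀ i, (1 - eps i) * lam i * (1 - eps i) = 0 := by
    intro i; by_cases h : lam i = 0 <;> simp [heps, h]
  set R : Matrix d d ℂ := V * diagonal (fun i => (p i : ℂ)) * Vᴴ with hR
  have hRH : Rᴴ = R := conj_ct V p
  have hone : (1 : Matrix d d ℂ) - diagonal (fun i => (eps i : ℂ))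
      = diagonal (fun i => ((1 - eps i : ℝ) : ℂ)) := by
    rw [← diagonal_one, diagonal_sub]
    exact diagonal_congr fun i => by push_cast; simp
  -- R * (XᴴX) = P
  have hRXX : R * (Xᴴ * X) = (posSemidef_conjTranspose_mul_self X).sqrt := by
    rw [hP]
    conv_lhs => rw [hspec]
    rw [hR, conj_mul hVV]
    congr 1
    congr 1
    exact diagonal_congr fun i => by exact_mod_cast hpl i
  -- UᴴU = V diag eps Vᴴ
  have hUU : (X * R)ᴴ * (X * R) = V * diagonal (fun i => (eps i : ℂ)) * Vᴴ := by
    have h0 : (X * R)ᴴ * (X * R) = Rᴴ * (Xᴴ * X) * R := by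
      rw [conjTranspose_mul]; simp only [mul_assoc]
    rw [h0, hRH]
    conv_lhs => rw [hspec]
    rw [hR, conj_mul hVV, conj_mul hVV]
    congr 1
    congr 1
    exact diagonal_congr fun i => by exact_mod_cast hplp i
  -- X * (V diag eps Vᴴ) = X
  have hZ0 : X * V * diagonal (fun i => ((1 - eps i : ℝ) : ℂ)) = 0 := by
    rw [← conjTranspose_mul_self_eq_zero]
    have hsd : (diagonal (fun i => ((1 - eps i : ℝ) : ℂ)))ᴴ
        = diagonal (fun i => ((1 - eps i : ℝ) : ℂ)) := by
      rw [diagonal_conjTranspose]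
      exact diagonal_congr fun i => by simp [Pi.star_apply, Complex.conj_ofReal]
    have h1 : (X * V * diagonal (fun i => ((1 - eps i : ℝ) : ℂ)))ᴴ
        = diagonal (fun i => ((1 - eps i : ℝ) : ℂ)) * Vᴴ * Xᴴ := by
      rw [conjTranspose_mul, conjTranspose_mul, hsd, mul_assoc]
    rw [h1]
    have h2 : diagonal (fun i => ((1 - eps i : ℝ) : ℂ)) * Vᴴ * Xᴴ *
        (X * V * diagonal (fun i => ((1 - eps i : ℝ) : ℂ)))
        = diagonal (fun i => ((1 - eps i : ℝ) : ℂ)) * (Vᴴ * (Xᴴ * X) * V) *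
          diagonal (fun i => ((1 - eps i : ℝ) : ℂ)) := by
      simp only [mul_assoc]
    have h3 : Vᴴ * (Xᴴ * X) * V = diagonal (fun i => (lam i : ℂ)) := by
      rw [hspec]
      calc Vᴴ * (V * diagonal (fun i => (lam i : ℂ)) * Vᴴ) * V
          = (Vᴴ * V) * diagonal (fun i => (lam i : ℂ)) * (Vᴴ * V) := by
            simp only [mul_assoc]
        _ = _ := by rw [hVV, one_mul, mul_one]
    rw [h2, h3, diagonal_mul_diagonal, diagonal_mul_diagonal]
    calc diagonal (fun i => ((1 - eps i : ℝ) : ℂ) * (lam i : ℂ) * ((1 - eps i : ℝ) : ℂ))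
        = diagonal (fun _ => (0 : ℂ)) :=
          diagonal_congr fun i => by exact_mod_cast hepsl i
      _ = 0 := diagonal_zero
  have hXE : X * (V * diagonal (fun i => (eps i : ℂ)) * Vᴴ) = X := by
    calc X * (V * diagonal (fun i => (eps i : ℂ)) * Vᴴ)
        = (X * V * diagonal (fun i => (eps i : ℂ))) * Vᴴ := by simp only [mul_assoc]
      _ = (X * V * (1 - diagonal (fun i => ((1 - eps i : ℝ) : ℂ)))) * Vᴴ := by
          rw [← hone, sub_sub_cancel]
      _ = (X * V - X * V * diagonal (fun i => ((1 - eps i : ℝ) : ℂ))) * Vᴴ := by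
          rw [mul_sub, mul_one]
      _ = X * V * Vᴴ := by rw [hZ0, sub_zero]
      _ = X := by rw [mul_assoc, hVV', mul_one]
  refine ⟨X * R, ?_, ?_, ?_⟩
  · -- norm bound
    apply opNorm_le_one
    have hS : (1 : Matrix d d ℂ) - (X * R)ᴴ * (X * R)
        = V * diagonal (fun i => ((1 - eps i : ℝ) : ℂ)) * Vᴴ := by
      rw [hUU]
      calc (1 : Matrix d d ℂ) - V * diagonal (fun i => (eps i : ℂ)) * Vᴴ
          = V * 1 * Vᴴ - V * diagonal (fun i => (eps i : ℂ)) * Vᴴ := by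
            rw [mul_one, hVV']
        _ = V * (1 - diagonal (fun i => (eps i : ℂ))) * Vᴴ := by
            rw [mul_sub, sub_mul]
        _ = _ := by rw [hone]
    rw [hS]
    have hSS : (V * diagonal (fun i => ((1 - eps i : ℝ) : ℂ)) * Vᴴ)ᴴ *
        (V * diagonal (fun i => ((1 - eps i : ℝ) : ℂ)) * Vᴴ)
        = V * diagonal (fun i => ((1 - eps i : ℝ) : ℂ)) * Vᴴ := by
      rw [conj_ct, conj_mul hVV]
      congr 1
      congr 1
      exact diagonal_congr fun i => by exact_mod_cast heps2 i
    have hps2 := posSemidef_conjTranspose_mul_self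
      (V * diagonal (fun i => ((1 - eps i : ℝ) : ℂ)) * Vᴴ)
    rwa [hSS] at hps2
  · -- X = U * P
    have hRP : R * (posSemidef_conjTranspose_mul_self X).sqrt
        = V * diagonal (fun i => (eps i : ℂ)) * Vᴴ := by
      rw [hP, hR, conj_mul hVV]
      congr 1
      congr 1
      exact diagonal_congr fun i => by exact_mod_cast hps i
    rw [mul_assoc, hRP, hXE]
  · -- Uᴴ * X = P
    have h0 : (X * R)ᴴ * X = Rᴴ * (Xᴴ * X) := by
      rw [conjTranspose_mul]; simp only [mul_assoc]
    rw [h0, hRH, hRXX]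


lemma norm_mul_le_one {A B : Matrix d d ℂ} (hA : ‖A‖ ≤ 1) (hB : ‖B‖ ≤ 1) :
    ‖A * B‖ ≤ 1 :=
  le_trans (l2_opNorm_mul A B)
    (mul_le_one₀ hA (norm_nonneg B) hB)

end TraceNormAux

open TraceNormAux in
/-- Contraction does not increase the trace norm. -/
theorem traceNorm_contraction_le {d : Type*} [Fintype d] [DecidableEq d]
    (M : Matrix d d ℂ) (hM : (1 - Mᴴ * M).PosSemidef)
    (A : Matrix d d ℂ) :
    traceNorm (M * A * Mᴴ) ≤ traceNorm A := by
  obtain ⟨U₁, hU₁, -, hU₁X⟩ := polar (M * A * Mᴴ)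
  obtain ⟨U₂, hU₂, hA2, -⟩ := polar A
  have hMn : ‖M‖ ≤ 1 := opNorm_le_one hM
  have hMc : ‖Mᴴ‖ ≤ 1 := by rw [l2_opNorm_conjTranspose]; exact hMn
  have hU₁c : ‖U₁ᴴ‖ ≤ 1 := by rw [l2_opNorm_conjTranspose]; exact hU₁
  unfold traceNorm
  rw [← hU₁X]
  have key : (U₁ᴴ * (M * A * Mᴴ)).trace
      = ((Mᴴ * U₁ᴴ * M * U₂) * (posSemidef_conjTranspose_mul_self A).sqrt).trace := by
    conv_lhs => rw [hA2]
    rw [show U₁ᴴ * (M * (U₂ * (posSemidef_conjTranspose_mul_self A).sqrt) * Mᴴ)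
        = (U₁ᴴ * M * U₂ * (posSemidef_conjTranspose_mul_self A).sqrt) * Mᴴ by
      simp only [mul_assoc]]
    rw [trace_mul_comm]
    congr 1
    simp only [mul_assoc]
  rw [key]
  have hB : ‖Mᴴ * U₁ᴴ * M * U₂‖ ≤ 1 :=
    norm_mul_le_one (norm_mul_le_one (norm_mul_le_one hMc hU₁c) hMn) hU₂
  exact re_trace_mul_le ((posSemidef_diagonal_iff.mpr fun i => by simp only [Function.comp_apply]; exact RCLike.ofReal_nonneg.mpr (Real.sqrt_nonneg _)).mul_mul_conjTranspose_same _) _ hB
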